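/- Let p : ℝ → ℝ be a polynomial and a < b real numbers. If |p(x) - p(y)| ≤ H for all x, y ∈ [a,b], then |p'(x)| ≤ (H/(b-a)) · (deg p)² for all x ∈ [a,b]. -/

import Mathlib

namespace MarkovAux
open Real Finset Polynomial Polynomial.Chebyshev

noncomputable def th (n k : ℕ) : ℝ := (2*k+1) * π / (2*n)
noncomputable def nd (n k : ℕ) : ℝ := Real.cos (th n k)
noncomputable def Pn (n : ℕ) : Polynomial ℝ := ∏ k ∈ range n, (X - C (nd n k))


lemma th_pos {n : ℕ} (hn : 1 ≤ n) (k : ℕ) : 0 < th n k := by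
  apply div_pos (by positivity) (by positivity)

lemma th_lt {n : ℕ} (hn : 1 ≤ n) {k : ℕ} (hk : k < 2*n) : th n k < 2*π := by
  rw [th, div_lt_iff₀ (by positivity)]
  have : (2*(k:ℝ)+1) < 2*(2*n) := by
    have : (k:ℝ) ≤ 2*n-1 := by
      have : (k:ℝ) + 1 ≤ 2*n := by exact_mod_cast hk
      linarith
    linarith
  nlinarith [pi_pos]

lemma one_sub_cos_th_pos {n : ℕ} (hn : 1 ≤ n) {k : ℕ} (hk : k < 2*n) :
    0 < 1 - cos (th n k) := by
  have h1 : cos (th n k) ≤ 1 := Real.cos_le_one _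
  have h2 : cos (th n k) ≠ 1 := by
    intro h
    have := (Real.cos_eq_one_iff_of_lt_of_lt (x := th n k)
      (by nlinarith [th_pos hn k, pi_pos]) (th_lt hn hk)).mp h
    exact absurd this (ne_of_gt (th_pos hn k))
  cases h1.lt_or_eq with
  | inl h => linarith
  | inr h => exact absurd h h2

lemma cos_n_th {n : ℕ} (hn : 1 ≤ n) (k : ℕ) : cos (n * th n k) = 0 := by
  have hn' : (n:ℝ) ≠ 0 := by positivity
  have : (n:ℝ) * th n k = k * π + π/2 := by
    rw [th]; field_simp
  rw [this, cos_add, Real.cos_pi_div_two, Real.sin_pi_div_two]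
  simp [Real.sin_nat_mul_pi]

lemma sin_n_th {n : ℕ} (hn : 1 ≤ n) (k : ℕ) : sin (n * th n k) = (-1)^k := by
  have hn' : (n:ℝ) ≠ 0 := by positivity
  have : (n:ℝ) * th n k = k * π + π/2 := by
    rw [th]; field_simp
  rw [this, sin_add, Real.cos_pi_div_two, Real.sin_pi_div_two]
  have : cos ((k:ℝ) * π) = (-1)^k := by
    simpa using Real.cos_add_nat_mul_pi 0 k
  simp [Real.sin_nat_mul_pi, this]

/-- the alternating sine sum vanishes for 1 ≤ j < n -/
lemma Z_eq_zero {n j : ℕ} (hn : 1 ≤ n) (hj1 : 1 ≤ j) (hjn : j < n) :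
    ∑ k ∈ range (2*n), (-1:ℝ)^k * Real.sin (j * th n k) = 0 := by
  have hnC : (n:ℂ) ≠ 0 := Nat.cast_ne_zero.mpr (by omega)
  set x : ℝ := j * π / n with hx
  set r : ℂ := -Complex.exp (x * Complex.I) with hr
  have hterm : ∀ k ∈ range (2*n), ((-1:ℂ)^k * Complex.exp ((j * th n k : ℝ) * Complex.I))
      = Complex.exp ((j * π / (2*n) : ℝ) * Complex.I) * r^k := by
    intro k _
    have hexp : ((j * th n k : ℝ) : ℂ) * Complex.I
        = ((j * π / (2*n) : ℝ) : ℂ) * Complex.I + (k:ℂ) * ((x:ℂ) * Complex.I) := by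
      push_cast [th, hx]
      field_simp
      ring
    rw [hexp, Complex.exp_add, Complex.exp_nat_mul, hr, neg_pow]
    ring
  have hr2n : r ^ (2*n) = 1 := by
    rw [hr, neg_pow, ← Complex.exp_nat_mul]
    have : (((2*n : ℕ)) : ℂ) * ((x:ℂ) * Complex.I) = (j:ℂ) * (2 * π * Complex.I) := by
      push_cast [hx]
      field_simp
    rw [this, Complex.exp_nat_mul, Complex.exp_two_pi_mul_I, one_pow]
    simp [pow_mul]
  have hrne : r ≠ 1 := by
    intro h
    have hexp : Complex.exp ((x:ℝ) * Complex.I) = -1 := by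
      have := congrArg Neg.neg h
      simpa [hr] using this
    have hre := congrArg Complex.re hexp
    rw [Complex.exp_ofReal_mul_I_re] at hre
    simp at hre
    have h2 : x < π := by
      rw [hx, div_lt_iff₀ (by positivity)]
      have : (j:ℝ) < n := by exact_mod_cast hjn
      nlinarith [pi_pos]
    have h3 : cos π < cos x :=
      Real.cos_lt_cos_of_nonneg_of_le_pi (by positivity) le_rfl h2
    rw [Real.cos_pi] at h3
    linarith
  have hsum : ∑ k ∈ range (2*n), ((-1:ℂ)^k * Complex.exp ((j * th n k : ℝ) * Complex.I)) = 0 := by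
    rw [Finset.sum_congr rfl hterm, ← Finset.mul_sum, geom_sum_eq hrne, hr2n]
    simp
  have himeq : ∀ k ∈ range (2*n), (-1:ℝ)^k * Real.sin (j * th n k)
      = ((-1:ℂ)^k * Complex.exp ((j * th n k : ℝ) * Complex.I)).im := by
    intro k _
    have hcast : ((-1:ℂ))^k = ((((-1:ℝ)^k) : ℝ) : ℂ) := by push_cast; ring
    have h1 : ((-1:ℂ)^k).re = (-1:ℝ)^k := by rw [hcast, Complex.ofReal_re]
    have h2 : ((-1:ℂ)^k).im = 0 := by rw [hcast, Complex.ofReal_im]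
    rw [Complex.mul_im, h1, h2, Complex.exp_ofReal_mul_I_im]
    ring
  rw [Finset.sum_congr rfl himeq, ← Complex.im_sum, hsum, Complex.zero_im]

lemma S_eq {n : ℕ} (hn : 1 ≤ n) {j : ℕ} (hj : j ≤ n) :
    ∑ k ∈ range (2*n), (-1:ℝ)^k * sin (j * th n k) / (1 - cos (th n k)) = 2*n*j := by
  obtain ⟨m, rfl⟩ : ∃ m, n = m + 1 := ⟨n-1, by omega⟩
  set n := m + 1
  set S : ℕ → ℝ := fun j => ∑ k ∈ range (2*n), (-1:ℝ)^k * sin (j * th n k) / (1 - cos (th n k))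
    with hS
  have hd : ∀ k ∈ range (2*n), (1 - cos (th n k)) ≠ 0 := fun k hk =>
    ne_of_gt (one_sub_cos_th_pos hn (mem_range.mp hk))
  -- recurrence
  have hrec : ∀ j : ℕ, S (j+2) + S j = 2 * S (j+1)
      - 2 * ∑ k ∈ range (2*n), (-1:ℝ)^k * sin ((j+1) * th n k) := by
    intro j
    rw [hS]
    simp only
    rw [← Finset.sum_add_distrib, Finset.mul_sum, Finset.mul_sum, ← Finset.sum_sub_distrib]
    apply Finset.sum_congr rfl
    intro k hk
    have hdk := hd k hk
    have e1 : ((j:ℝ)+2) * th n k = ((j:ℝ)+1) * th n k + th n k := by ring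
    have e2 : (j:ℝ) * th n k = ((j:ℝ)+1) * th n k - th n k := by ring
    push_cast
    rw [e1, e2, Real.sin_add, Real.sin_sub]
    field_simp
    ring
  have hS0 : S 0 = 0 := by
    rw [hS]; simp
  -- S j = j * S 1 for j ≤ n
  have claim : ∀ j, j ≤ n → S j = j * S 1 := by
    intro j
    induction j using Nat.strong_induction_on with
    | _ j ih =>
      match j with
      | 0 => intro _; simp [hS0]
      | 1 => intro _; simp
      | (m'+2) => 
        intro hm
        have hz := Z_eq_zero hn (j := m'+1) (by omega) (by omega)
        have hr := hrec m'
        have h1 := ih (m'+1) (by omega) (by omega)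
        have h2 := ih m' (by omega) (by omega)
        push_cast at h1 h2 hz hr ⊢
        linarith
  -- S (m+2) = S m
  have hsym : S (m+2) = S m := by
    rw [hS]
    apply Finset.sum_congr rfl
    intro k hk
    have e1 : ((m:ℝ)+2) * th n k = (n:ℝ) * th n k + th n k := by simp [n]; push_cast; ring
    have e2 : (m:ℝ) * th n k = (n:ℝ) * th n k - th n k := by simp [n]; push_cast; ring
    push_cast
    rw [e1, e2, Real.sin_add, Real.sin_sub, cos_n_th hn]
    ring_nf
  have hZn : ∑ k ∈ range (2*n), (-1:ℝ)^k * sin ((m+1) * th n k) = 2*n := by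
    have : ∀ k ∈ range (2*n), (-1:ℝ)^k * sin ((m+1) * th n k) = 1 := by
      intro k hk
      have : ((m:ℝ)+1) = ((n:ℕ):ℝ) := by simp [n]
      rw [this, sin_n_th hn, ← mul_pow]
      norm_num
    rw [Finset.sum_congr rfl this]
    simp
  have hS1 : S 1 = 2*n := by
    have hr := hrec m
    have h1 := claim (m+1) (by omega)
    have h2 := claim m (by omega)
    push_cast at hr hZn h1 h2
    rw [hZn] at hr
    push_cast
    linarith [hsym]
  show S j = 2*(n:ℝ)*(j:ℝ)
  rw [claim j hj, hS1]
  ring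

lemma T_deg_coeff : ∀ n : ℕ, (T ℝ n).natDegree ≤ n ∧ (T ℝ n).coeff n = 2^(n-1) := by
  intro n
  induction n using Nat.strong_induction_on with
  | _ n ih =>
    match n with
    | 0 => simp [T_zero]
    | 1 => simp [T_one]
    | (m+2) =>
      have h1 := ih (m+1) (by omega)
      have h0 := ih m (by omega)
      have hT : T ℝ ((m:ℤ)+2) = 2 * X * T ℝ ((m:ℤ)+1) - T ℝ (m:ℤ) := T_add_two ℝ m
      have hcast : ((m+2 : ℕ) : ℤ) = (m:ℤ)+2 := by push_cast; ring
      have hcast1 : ((m+1 : ℕ) : ℤ) = (m:ℤ)+1 := by push_cast; ring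
      rw [hcast1] at h1
      rw [hcast, hT]
      constructor
      · apply le_trans (natDegree_sub_le _ _)
        apply max_le
        · apply le_trans (natDegree_mul_le)
          have : (2 * X : ℝ[X]).natDegree ≤ 1 := by
            apply le_trans natDegree_mul_le
            simp
          omega
        · omega
      · have e2 : (2 * X * T ℝ ((m:ℤ)+1) : ℝ[X]) = C 2 * (X * T ℝ ((m:ℤ)+1)) := by
          rw [map_ofNat Polynomial.C 2, ← mul_assoc]
        rw [coeff_sub, e2, coeff_C_mul, coeff_X_mul]
        have hm : (T ℝ (m:ℤ)).coeff (m+2) = 0 := by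
          apply coeff_eq_zero_of_natDegree_lt
          omega
        rw [hm, h1.2]
        simp [pow_succ]
        ring

lemma cheb_decomp : ∀ (n : ℕ) (q : ℝ[X]), q.natDegree ≤ n →
    ∃ c : ℕ → ℝ, ∀ θ : ℝ, q.eval (cos θ) = ∑ j ∈ range (n+1), c j * cos (j*θ) := by
  intro n
  induction n with
  | zero =>
    intro q hq
    refine ⟨fun _ => q.coeff 0, fun θ => ?_⟩
    rw [Polynomial.eq_C_of_natDegree_le_zero hq]
    simp
  | succ n ih =>
    intro q hq
    have hcastI : ((n+1 : ℕ) : ℤ) = (n:ℤ)+1 := by push_cast; ring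
    have hTd := (T_deg_coeff (n+1)).1
    have hTc := (T_deg_coeff (n+1)).2
    rw [hcastI] at hTd hTc
    set t : ℝ := q.coeff (n+1) / 2^n with ht
    set r : ℝ[X] := q - C t * T ℝ (n+1) with hr
    have hrdeg : r.natDegree ≤ n := by
      have h1 : r.natDegree ≤ n+1 := by
        apply le_trans (natDegree_sub_le _ _)
        apply max_le hq
        apply le_trans natDegree_mul_le
        simpa using hTd
      have h2 : r.coeff (n+1) = 0 := by
        rw [hr, coeff_sub, coeff_C_mul, hTc]
        rw [ht]
        field_simp
        simp
      -- natDegree ≤ n+1 and top coeff zero gives ≤ n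
      by_contra hcon
      push_neg at hcon
      have hne : r ≠ 0 := by
        intro h0
        rw [h0] at hcon
        simp at hcon
      have hdeg : r.natDegree = n+1 := by omega
      have hlc := Polynomial.leadingCoeff_ne_zero.mpr hne
      rw [Polynomial.leadingCoeff, hdeg] at hlc
      exact hlc h2
    obtain ⟨c, hc⟩ := ih r hrdeg
    refine ⟨fun j => if j = n+1 then t else c j, fun θ => ?_⟩
    have hq' : q = r + C t * T ℝ (n+1) := by rw [hr]; ring
    rw [hq', Finset.sum_range_succ]
    simp only [eval_add, eval_mul, eval_C]
    rw [hc θ]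
    have hT := T_real_cos θ (n+1:ℕ)
    rw [hcastI] at hT
    rw [hT]
    have : ∀ j ∈ range (n+1), c j * cos (j*θ)
        = (if j = n+1 then t else c j) * cos (j*θ) := by
      intro j hj
      rw [if_neg (by simp at hj; omega)]
    rw [Finset.sum_congr rfl this]
    simp

lemma bernstein {n : ℕ} (hn : 1 ≤ n) {q : ℝ[X]} (hq : q.natDegree ≤ n) {M : ℝ}
    (hM : ∀ y ∈ Set.Icc (-1:ℝ) 1, |q.eval y| ≤ M) (θ : ℝ) :
    |Real.sin θ * q.derivative.eval (Real.cos θ)| ≤ n * M := by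
  obtain ⟨c, hc⟩ := cheb_decomp n q hq
  set A : ℝ := ∑ j ∈ range (n+1), c j * (j * sin (j*θ)) with hA
  -- step 1 : sin θ * q'(cos θ) = A
  have hderiv : Real.sin θ * q.derivative.eval (Real.cos θ) = A := by
    have h1 : HasDerivAt (fun φ => q.eval (Real.cos φ))
        (q.derivative.eval (Real.cos θ) * (-Real.sin θ)) θ :=
      (q.hasDerivAt (Real.cos θ)).comp θ (Real.hasDerivAt_cos θ)
    have h2 : HasDerivAt (fun φ => ∑ j ∈ range (n+1), c j * Real.cos (j*φ))
        (∑ j ∈ range (n+1), c j * (-Real.sin (j*θ) * ((j:ℝ)*1))) θ := by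
      apply HasDerivAt.fun_sum
      intro j hj
      exact (((Real.hasDerivAt_cos ((j:ℝ)*θ)).comp θ
        ((hasDerivAt_id θ).const_mul (j:ℝ))).const_mul (c j))
    have hfun : (fun φ => q.eval (Real.cos φ)) = fun φ => ∑ j ∈ range (n+1), c j * Real.cos (j*φ) :=
      funext hc
    rw [hfun] at h1
    have := h1.unique h2
    rw [hA]
    rw [show q.derivative.eval (Real.cos θ) * (-Real.sin θ)
        = -(Real.sin θ * q.derivative.eval (Real.cos θ)) by ring] at this
    have h3 : ∑ j ∈ range (n+1), c j * (-Real.sin ((j:ℝ)*θ) * ((j:ℝ)*1))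
        = -∑ j ∈ range (n+1), c j * ((j:ℝ) * Real.sin ((j:ℝ)*θ)) := by
      rw [← Finset.sum_neg_distrib]
      exact Finset.sum_congr rfl (fun j hj => by ring)
    rw [h3] at this
    linarith
  -- step 2 : the quadrature formula
  have hquad : ∑ k ∈ range (2*n), (-1:ℝ)^k *
      ((q.eval (cos (θ + th n k)) - q.eval (cos (θ - th n k))) / (1 - cos (th n k)))
      = -(4*n) * A := by
    have hgk : ∀ k : ℕ, q.eval (cos (θ + th n k)) - q.eval (cos (θ - th n k))
        = ∑ j ∈ range (n+1), c j * (-2 * sin ((j:ℝ)*θ) * sin ((j:ℝ) * th n k)) := by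
      intro k
      rw [hc (θ + th n k), hc (θ - th n k), ← Finset.sum_sub_distrib]
      apply Finset.sum_congr rfl
      intro j hj
      have e1 : (j:ℝ) * (θ + th n k) = (j:ℝ)*θ + (j:ℝ)*th n k := by ring
      have e2 : (j:ℝ) * (θ - th n k) = (j:ℝ)*θ - (j:ℝ)*th n k := by ring
      rw [e1, e2, Real.cos_add, Real.cos_sub]
      ring
    calc ∑ k ∈ range (2*n), (-1:ℝ)^k *
          ((q.eval (cos (θ + th n k)) - q.eval (cos (θ - th n k))) / (1 - cos (th n k)))
        = ∑ k ∈ range (2*n), ∑ j ∈ range (n+1),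
            (c j * (-2 * sin ((j:ℝ)*θ))) * ((-1:ℝ)^k * sin ((j:ℝ) * th n k) / (1 - cos (th n k))) := by
          apply Finset.sum_congr rfl
          intro k hk
          rw [hgk k, Finset.sum_div, Finset.mul_sum]
          apply Finset.sum_congr rfl
          intro j hj
          ring
      _ = ∑ j ∈ range (n+1), (c j * (-2 * sin ((j:ℝ)*θ))) * (2*n*j) := by
          rw [Finset.sum_comm]
          apply Finset.sum_congr rfl
          intro j hj
          rw [← Finset.mul_sum, S_eq hn (by simp at hj; omega)]
      _ = -(4*n) * A := by
          rw [hA, Finset.mul_sum]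
          apply Finset.sum_congr rfl
          intro j hj
          ring
  -- step 3 : the bound
  have hM0 : 0 ≤ M := le_trans (abs_nonneg _) (hM 0 (by norm_num))
  have hsum_inv : ∑ k ∈ range (2*n), 1 / (1 - cos (th n k)) = 2*(n:ℝ)^2 := by
    have := S_eq hn (le_refl n)
    rw [Finset.sum_congr rfl (fun k hk => ?_)] at this
    · rw [this]; ring
    · rw [sin_n_th hn, ← mul_pow]
      norm_num
  have hbound : |(-(4*(n:ℝ))) * A| ≤ 2*M * (2*(n:ℝ)^2) := by
    rw [← hquad]
    apply le_trans (Finset.abs_sum_le_sum_abs _ _)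
    rw [← hsum_inv, Finset.mul_sum]
    apply Finset.sum_le_sum
    intro k hk
    have hdk := one_sub_cos_th_pos hn (mem_range.mp hk)
    rw [abs_mul, abs_pow, abs_neg, abs_one, one_pow, one_mul, abs_div,
      abs_of_pos hdk, div_le_iff₀ hdk]
    rw [show 2*M*(1/(1-cos (th n k)))*(1-cos (th n k)) = 2*M by field_simp]
    have i1 := hM (cos (θ + th n k)) (Set.mem_Icc.mpr ⟨Real.neg_one_le_cos _, Real.cos_le_one _⟩)
    have i2 := hM (cos (θ - th n k)) (Set.mem_Icc.mpr ⟨Real.neg_one_le_cos _, Real.cos_le_one _⟩)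
    calc |q.eval (cos (θ + th n k)) - q.eval (cos (θ - th n k))|
        ≤ |q.eval (cos (θ + th n k))| + |q.eval (cos (θ - th n k))| := abs_sub _ _
      _ ≤ 2*M := by linarith
  rw [hderiv]
  have hnR : (1:ℝ) ≤ n := by exact_mod_cast hn
  rw [abs_mul] at hbound
  have h4 : |(-(4*(n:ℝ)))| = 4*n := by
    rw [abs_neg, abs_of_pos (by linarith)]
  rw [h4] at hbound
  nlinarith [abs_nonneg A]

lemma th_lt_pi {n : ℕ} (hn : 1 ≤ n) {k : ℕ} (hk : k < n) : th n k < π := by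
  rw [th, div_lt_iff₀ (by positivity)]
  have : (2*(k:ℝ)+1) < 2*n := by
    have : (k:ℝ) + 1 ≤ n := by exact_mod_cast hk
    linarith
  nlinarith [pi_pos]

lemma th_mem {n : ℕ} (hn : 1 ≤ n) {k : ℕ} (hk : k < n) : th n k ∈ Set.Icc 0 π :=
  ⟨(th_pos hn k).le, (th_lt_pi hn hk).le⟩

lemma sin_th_pos {n : ℕ} (hn : 1 ≤ n) {k : ℕ} (hk : k < n) : 0 < Real.sin (th n k) :=
  Real.sin_pos_of_pos_of_lt_pi (th_pos hn k) (th_lt_pi hn hk)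

lemma nd_injOn {n : ℕ} (hn : 1 ≤ n) : Set.InjOn (nd n) (range n) := by
  intro a ha b hb hab
  simp only [coe_range, Set.mem_Iio] at ha hb
  have hth := Real.injOn_cos (th_mem hn ha) (th_mem hn hb) hab
  rw [th, th] at hth
  have hpi := Real.pi_ne_zero
  have hn' : (2*(n:ℝ)) ≠ 0 := by positivity
  field_simp at hth
  have : (a:ℝ) = b := by linarith
  exact_mod_cast this

lemma T_eval_nd {n : ℕ} (hn : 1 ≤ n) (k : ℕ) : (T ℝ n).eval (nd n k) = 0 := by
  rw [nd, T_real_cos]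
  have : ((n:ℤ):ℝ) = (n:ℝ) := by push_cast; ring
  rw [this, cos_n_th hn]

lemma Pn_monic (n : ℕ) : (Pn n).Monic :=
  monic_prod_of_monic _ _ (fun k _ => monic_X_sub_C _)

lemma Pn_natDegree (n : ℕ) : (Pn n).natDegree = n := by
  rw [Pn, natDegree_prod _ _ (fun k _ => X_sub_C_ne_zero _)]
  simp [natDegree_X_sub_C]

lemma T_eq_Pn {n : ℕ} (hn : 1 ≤ n) : T ℝ n = C ((2:ℝ)^(n-1)) * Pn n := by
  set D : ℝ[X] := T ℝ n - C ((2:ℝ)^(n-1)) * Pn n with hD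
  have hdegD : D.degree < (range n).card := by
    rw [Finset.card_range]
    rcases eq_or_ne D 0 with h0 | h0
    · rw [h0, degree_zero]; exact WithBot.bot_lt_coe n
    · rw [degree_eq_natDegree h0, Nat.cast_lt]
      have h1 : D.natDegree ≤ n := by
        apply le_trans (natDegree_sub_le _ _)
        apply max_le (T_deg_coeff n).1
        apply le_trans natDegree_mul_le
        simp [Pn_natDegree]
      have h2 : D.coeff n = 0 := by
        rw [hD, coeff_sub, (T_deg_coeff n).2, coeff_C_mul]
        have : (Pn n).coeff n = 1 := by
          have := (Pn_monic n).leadingCoeff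
          rwa [Polynomial.leadingCoeff, Pn_natDegree] at this
        rw [this]
        ring
      rcases lt_or_eq_of_le h1 with h | h
      · exact h
      · exfalso
        have := Polynomial.leadingCoeff_ne_zero.mpr h0
        rw [Polynomial.leadingCoeff, h] at this
        exact this h2
  have hevalD : ∀ k ∈ range n, D.eval (nd n k) = 0 := by
    intro k hk
    rw [hD, eval_sub, eval_mul, eval_C, T_eval_nd hn]
    have : (Pn n).eval (nd n k) = 0 := by
      rw [Pn, eval_prod]
      apply Finset.prod_eq_zero hk
      simp
    rw [this]
    ring
  have := Lagrange.eq_interpolate_of_eval_eq (v := nd n) (r := fun _ => (0:ℝ))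
    (nd_injOn hn) hdegD (fun i hi => hevalD i hi)
  have hz : (Lagrange.interpolate (range n) (nd n)) (fun _ => (0:ℝ)) = 0 := by
    have : (fun _ : ℕ => (0:ℝ)) = (0 : ℕ → ℝ) := rfl
    rw [this, map_zero]
  rw [hz] at this
  exact sub_eq_zero.mp this

lemma derivative_prod_lin (s : Finset ℕ) (f : ℕ → ℝ) :
    derivative (∏ i ∈ s, (X - C (f i))) = ∑ i ∈ s, ∏ j ∈ s.erase i, (X - C (f j)) := by
  classical
  induction s using Finset.induction_on with
  | empty => simp
  | @insert a s ha ih =>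
    rw [Finset.prod_insert ha, derivative_mul, ih, Finset.sum_insert ha]
    rw [Finset.erase_insert ha]
    simp only [derivative_sub, derivative_X, derivative_C, sub_zero, one_mul]
    rw [Finset.mul_sum]
    congr 1
    apply Finset.sum_congr rfl
    intro i hi
    rw [Finset.erase_insert_of_ne (by rintro rfl; exact ha hi), Finset.prod_insert
      (by simp [ha, Finset.mem_erase])]

-- derivative of T via trig
lemma T_deriv_trig (n : ℕ) (θ : ℝ) :
    Real.sin θ * (T ℝ n).derivative.eval (Real.cos θ) = n * Real.sin (n * θ) := by
  have h1 : HasDerivAt (fun φ => (T ℝ n).eval (Real.cos φ))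
      ((T ℝ n).derivative.eval (Real.cos θ) * (-Real.sin θ)) θ :=
    ((T ℝ n).hasDerivAt (Real.cos θ)).comp θ (Real.hasDerivAt_cos θ)
  have h2 : HasDerivAt (fun φ => Real.cos ((n:ℝ) * φ))
      (-Real.sin ((n:ℝ)*θ) * ((n:ℝ)*1)) θ :=
    (Real.hasDerivAt_cos ((n:ℝ)*θ)).comp θ ((hasDerivAt_id θ).const_mul (n:ℝ))
  have hfun : (fun φ => (T ℝ n).eval (Real.cos φ)) = fun φ => Real.cos ((n:ℝ) * φ) := by
    funext φ
    rw [T_real_cos]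
    norm_num
  rw [hfun] at h1
  have := h1.unique h2
  nlinarith [this]

lemma abs_sin_nat_mul_le (m : ℕ) (x : ℝ) : |Real.sin (m * x)| ≤ m * |Real.sin x| := by
  induction m with
  | zero => simp
  | succ m ih =>
    have : ((m:ℝ)+1) * x = (m:ℝ)*x + x := by ring
    push_cast
    rw [this, Real.sin_add]
    apply le_trans (abs_add_le _ _)
    have h1 : |Real.sin ((m:ℝ)*x) * Real.cos x| ≤ |Real.sin ((m:ℝ)*x)| := by
      rw [abs_mul]
      exact mul_le_of_le_one_right (abs_nonneg _) (Real.abs_cos_le_one x)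
    have h2 : |Real.cos ((m:ℝ)*x) * Real.sin x| ≤ |Real.sin x| := by
      rw [abs_mul]
      exact mul_le_of_le_one_left (abs_nonneg _) (Real.abs_cos_le_one _)
    linarith
 
lemma T_deriv_bound (n : ℕ) {y : ℝ} (hy : y ∈ Set.Icc (-1:ℝ) 1) :
    |(T ℝ n).derivative.eval y| ≤ (n:ℝ)^2 := by
  have hsub : Set.Icc (-1:ℝ) 1 ⊆ {y : ℝ | |(T ℝ n).derivative.eval y| ≤ (n:ℝ)^2} := by
    rw [← closure_Ioo (by norm_num : (-1:ℝ) ≠ 1)]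
    apply IsClosed.closure_subset_iff ?_ |>.mpr ?_
    · apply isClosed_le ?_ continuous_const
      exact (continuous_abs).comp (Polynomial.continuous _)
    · intro y hy
      simp only [Set.mem_setOf_eq]
      obtain ⟨hy1, hy2⟩ := hy
      set θ := Real.arccos y with hθ
      have hcos : Real.cos θ = y := Real.cos_arccos hy1.le hy2.le
      have hθ1 : 0 < θ := Real.arccos_pos.mpr hy2
      have hθ2 : θ < π := lt_of_le_of_ne (Real.arccos_le_pi y)
        (fun h => by have := Real.arccos_eq_pi.mp h; linarith)
      have hs : 0 < Real.sin θ := Real.sin_pos_of_pos_of_lt_pi hθ1 hθ2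
      have htrig := T_deriv_trig n θ
      rw [hcos] at htrig
      have habs : Real.sin θ * |(T ℝ n).derivative.eval y| = |(n:ℝ) * Real.sin ((n:ℝ)*θ)| := by
        rw [← htrig, abs_mul, abs_of_pos hs]
      have hb : |(n:ℝ) * Real.sin ((n:ℝ)*θ)| ≤ (n:ℝ)^2 * Real.sin θ := by
        rw [abs_mul, abs_of_nonneg (Nat.cast_nonneg n)]
        have := abs_sin_nat_mul_le n θ
        rw [abs_of_pos hs] at this
        nlinarith [Nat.cast_nonneg (α := ℝ) n]
      rw [← habs] at hb
      rw [← mul_le_mul_iff_right₀ hs]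
      nlinarith [hb]
  exact hsub hy

lemma Pn_deriv (n : ℕ) :
    (Pn n).derivative = ∑ k ∈ range n, ∏ j ∈ (range n).erase k, (X - C (nd n j)) :=
  derivative_prod_lin _ _

lemma Pn_deriv_eval_node {n k : ℕ} (hn : 1 ≤ n) (hk : k ∈ range n) :
    (Pn n).derivative.eval (nd n k) = ∏ j ∈ (range n).erase k, (nd n k - nd n j) := by
  rw [Pn_deriv, eval_finset_sum]
  rw [Finset.sum_eq_single k]
  · rw [eval_prod]
    apply Finset.prod_congr rfl
    intro j hj
    simp
  · intro i hi hik
    rw [eval_prod]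
    apply Finset.prod_eq_zero (Finset.mem_erase.mpr ⟨fun h => hik (h.symm) , hk⟩)
    simp
  · intro h
    exact absurd hk h
 
lemma T_deriv_eval_node {n k : ℕ} (hn : 1 ≤ n) (hk : k < n) :
    (T ℝ n).derivative.eval (nd n k) = n * (-1)^k / Real.sin (th n k) := by
  have h := T_deriv_trig n (th n k)
  rw [sin_n_th hn] at h
  have hs := sin_th_pos hn hk
  rw [show (nd n k) = Real.cos (th n k) from rfl]
  field_simp at h ⊢
  linarith
 
lemma w_abs {n k : ℕ} (hn : 1 ≤ n) (hk : k < n) :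
    |∏ j ∈ (range n).erase k, (nd n k - nd n j)|
      = n / ((2:ℝ)^(n-1) * Real.sin (th n k)) := by
  have h1 : ((2:ℝ)^(n-1)) * ∏ j ∈ (range n).erase k, (nd n k - nd n j)
      = (T ℝ n).derivative.eval (nd n k) := by
    rw [T_eq_Pn hn, derivative_C_mul, eval_mul, eval_C (a := ((2:ℝ)^(n-1))),
      Pn_deriv_eval_node hn (Finset.mem_range.mpr hk)]
  have hs := sin_th_pos hn hk
  have h2 : |(T ℝ n).derivative.eval (nd n k)| = n / Real.sin (th n k) := by
    rw [T_deriv_eval_node hn hk, abs_div, abs_of_pos hs, abs_mul, abs_pow, abs_neg, abs_one,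
      one_pow, mul_one, abs_of_nonneg (Nat.cast_nonneg n)]
  have h3 : |((2:ℝ)^(n-1)) * ∏ j ∈ (range n).erase k, (nd n k - nd n j)|
      = ((2:ℝ)^(n-1)) * |∏ j ∈ (range n).erase k, (nd n k - nd n j)| := by
    rw [abs_mul, abs_of_pos (by positivity)]
  rw [h1, h2] at h3
  have h2pos : (0:ℝ) < (2:ℝ)^(n-1) := by positivity
  field_simp at h3 ⊢
  linarith
 
/-- endpoint zone estimate -/
lemma endpoint_bound {n : ℕ} (hn : 1 ≤ n) {q : ℝ[X]} (hq : q.natDegree ≤ n) {M : ℝ}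
    (hM : ∀ y ∈ Set.Icc (-1:ℝ) 1, |q.eval y| ≤ M) {x : ℝ} (hx : x ∈ Set.Icc (-1:ℝ) 1)
    (hside : (∀ j < n, nd n j ≤ x) ∨ (∀ j < n, x ≤ nd n j)) :
    |q.derivative.eval x| ≤ (n:ℝ)^2 * M := by
  classical
  have hM0 : 0 ≤ M := le_trans (abs_nonneg _) (hM 0 (by norm_num))
  -- interpolation representation
  have hdeg : q.derivative.degree < (range n).card := by
    rw [Finset.card_range]
    rcases eq_or_ne q 0 with h0 | h0
    · rw [h0]
      simp only [derivative_zero, degree_zero]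
      exact WithBot.bot_lt_coe n
    · apply lt_of_lt_of_le (degree_derivative_lt h0)
      apply le_trans (degree_le_natDegree)
      exact_mod_cast hq
  have hrep := Lagrange.eq_interpolate (nd_injOn hn) hdeg (f := q.derivative)
  have heval : q.derivative.eval x = ∑ k ∈ range n,
      q.derivative.eval (nd n k) * ((Lagrange.basis (range n) (nd n) k).eval x) := by
    conv_lhs => rw [hrep]
    rw [Lagrange.interpolate_apply, eval_finset_sum]
    apply Finset.sum_congr rfl
    intro k hk
    rw [eval_mul, eval_C]
  -- bound each term
  have hterm : ∀ k ∈ range n, |q.derivative.eval (nd n k) * ((Lagrange.basis (range n) (nd n) k).eval x)|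
      ≤ M * 2^(n-1) * ∏ j ∈ (range n).erase k, |x - nd n j| := by
    intro k hk
    have hkn := Finset.mem_range.mp hk
    have hs := sin_th_pos hn hkn
    -- derivative value bound via bernstein
    have hb := bernstein hn hq hM (th n k)
    rw [abs_mul, abs_of_pos hs] at hb
    -- basis eval
    have hbasis : (Lagrange.basis (range n) (nd n) k).eval x
        = (∏ j ∈ (range n).erase k, (nd n k - nd n j))⁻¹ * ∏ j ∈ (range n).erase k, (x - nd n j) := by
      rw [Lagrange.basis, eval_prod]
      have hbd : ∀ j ∈ (range n).erase k, (Lagrange.basisDivisor (nd n k) (nd n j)).eval x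
          = (nd n k - nd n j)⁻¹ * (x - nd n j) := fun j _ => by
        rw [Lagrange.basisDivisor, eval_mul, eval_C, eval_sub, eval_X, eval_C]
      rw [Finset.prod_congr rfl hbd, Finset.prod_mul_distrib, ← Finset.prod_inv_distrib]
    rw [abs_mul, hbasis, abs_mul, abs_inv, w_abs hn hkn, abs_prod]
    have hwpos : (0:ℝ) < (n:ℝ) / ((2:ℝ)^(n-1) * Real.sin (th n k)) := by
      have : (0:ℝ) < (n:ℝ) := by exact_mod_cast hn
      positivity
    have hqd : |q.derivative.eval (nd n k)| ≤ n * M / Real.sin (th n k) := by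
      rw [le_div_iff₀ hs]
      calc |q.derivative.eval (nd n k)| * Real.sin (th n k)
          = Real.sin (th n k) * |q.derivative.eval (cos (th n k))| := by rw [mul_comm]; rfl
        _ ≤ n * M := hb
    have hprod_nonneg : (0:ℝ) ≤ ∏ j ∈ (range n).erase k, |x - nd n j| :=
      Finset.prod_nonneg (fun j _ => abs_nonneg _)
    have hnpos : (0:ℝ) < n := by exact_mod_cast hn
    have key : |q.derivative.eval (nd n k)| * ((n:ℝ) / ((2:ℝ)^(n-1) * Real.sin (th n k)))⁻¹
        ≤ M * 2^(n-1) := by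
      rw [inv_div]
      calc |q.derivative.eval (nd n k)| * ((2:ℝ)^(n-1) * Real.sin (th n k) / n)
          ≤ (n * M / Real.sin (th n k)) * ((2:ℝ)^(n-1) * Real.sin (th n k) / n) := by
            apply mul_le_mul_of_nonneg_right hqd (by positivity)
        _ = M * 2^(n-1) := by field_simp
    calc |q.derivative.eval (nd n k)| * (((n:ℝ) / ((2:ℝ)^(n-1) * Real.sin (th n k)))⁻¹
            * ∏ j ∈ (range n).erase k, |x - nd n j|)
        = (|q.derivative.eval (nd n k)| * ((n:ℝ) / ((2:ℝ)^(n-1) * Real.sin (th n k)))⁻¹)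
            * ∏ j ∈ (range n).erase k, |x - nd n j| := by ring
      _ ≤ (M * 2^(n-1)) * ∏ j ∈ (range n).erase k, |x - nd n j| :=
          mul_le_mul_of_nonneg_right key hprod_nonneg
      _ = M * 2^(n-1) * ∏ j ∈ (range n).erase k, |x - nd n j| := by ring
  -- sum the bounds
  have hstep : |q.derivative.eval x| ≤ M * 2^(n-1) *
      ∑ k ∈ range n, ∏ j ∈ (range n).erase k, |x - nd n j| := by
    rw [heval]
    apply le_trans (Finset.abs_sum_le_sum_abs _ _)
    rw [Finset.mul_sum]
    apply Finset.sum_le_sum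
    intro k hk
    apply le_trans (hterm k hk)
    apply le_of_eq
    ring
  -- sign analysis
  have hsign : ∑ k ∈ range n, ∏ j ∈ (range n).erase k, |x - nd n j|
      = |∑ k ∈ range n, ∏ j ∈ (range n).erase k, (x - nd n j)| := by
    rcases hside with hA | hB
    · have h1 : ∀ k ∈ range n, ∏ j ∈ (range n).erase k, |x - nd n j|
          = ∏ j ∈ (range n).erase k, (x - nd n j) := by
        intro k hk
        apply Finset.prod_congr rfl
        intro j hj
        exact abs_of_nonneg (by
          have := hA j (Finset.mem_range.mp (Finset.mem_of_mem_erase hj)); linarith)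
      rw [Finset.sum_congr rfl h1]
      rw [abs_of_nonneg]
      apply Finset.sum_nonneg
      intro k hk
      apply Finset.prod_nonneg
      intro j hj
      have := hA j (Finset.mem_range.mp (Finset.mem_of_mem_erase hj)); linarith
    · have h1 : ∀ k ∈ range n, ∏ j ∈ (range n).erase k, |x - nd n j|
          = (-1:ℝ)^(n-1) * ∏ j ∈ (range n).erase k, (x - nd n j) := by
        intro k hk
        have h2 : ∀ j ∈ (range n).erase k, |x - nd n j| = (-1) * (x - nd n j) := by
          intro j hj
          have := hB j (Finset.mem_range.mp (Finset.mem_of_mem_erase hj))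
          rw [abs_of_nonpos (by linarith)]
          ring
        rw [Finset.prod_congr rfl h2, Finset.prod_mul_distrib, Finset.prod_const,
          Finset.card_erase_of_mem hk, Finset.card_range]
      rw [Finset.sum_congr rfl h1, ← Finset.mul_sum]
      have hpos : (0:ℝ) ≤ (-1:ℝ)^(n-1) * ∑ k ∈ range n, ∏ j ∈ (range n).erase k, (x - nd n j) := by
        rw [Finset.mul_sum]
        apply Finset.sum_nonneg
        intro k hk
        rw [← h1 k hk]
        exact Finset.prod_nonneg (fun j _ => abs_nonneg _)
      rw [← abs_of_nonneg hpos, abs_mul, abs_pow, abs_neg, abs_one, one_pow, one_mul]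
  -- identify the sum with Pn'
  have hPsum : ∑ k ∈ range n, ∏ j ∈ (range n).erase k, (x - nd n j)
      = (Pn n).derivative.eval x := by
    rw [Pn_deriv, eval_finset_sum]
    apply Finset.sum_congr rfl
    intro k hk
    rw [eval_prod]
    apply Finset.prod_congr rfl
    intro j hj
    simp
  rw [hsign, hPsum] at hstep
  have hT' : (T ℝ n).derivative.eval x = (2:ℝ)^(n-1) * (Pn n).derivative.eval x := by
    rw [T_eq_Pn hn, derivative_C_mul, eval_mul, eval_C]
  have hTb := T_deriv_bound n hx
  rw [hT', abs_mul, abs_of_pos (by positivity : (0:ℝ) < (2:ℝ)^(n-1))] at hTb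
  calc |q.derivative.eval x| ≤ M * 2^(n-1) * |(Pn n).derivative.eval x| := hstep
    _ ≤ M * (n:ℝ)^2 := by nlinarith [abs_nonneg ((Pn n).derivative.eval x), hM0]
    _ = (n:ℝ)^2 * M := by ring

lemma th_mono {n : ℕ} (hn : 1 ≤ n) {j k : ℕ} (hjk : j ≤ k) : th n j ≤ th n k := by
  rw [th, th]
  gcongr

theorem core {n : ℕ} (hn : 1 ≤ n) {q : ℝ[X]} (hq : q.natDegree ≤ n) {M : ℝ}
    (hM : ∀ y ∈ Set.Icc (-1:ℝ) 1, |q.eval y| ≤ M) {x : ℝ} (hx : x ∈ Set.Icc (-1:ℝ) 1) :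
    |q.derivative.eval x| ≤ (n:ℝ)^2 * M := by
  obtain ⟨hx1, hx2⟩ := hx
  have hM0 : 0 ≤ M := le_trans (abs_nonneg _) (hM 0 (by norm_num))
  have hnR : (1:ℝ) ≤ n := by exact_mod_cast hn
  set γ := th n 0 with hγ
  have hγpos : 0 < γ := th_pos hn 0
  have hγle : γ ≤ π/2 := by
    rw [hγ, th, div_le_div_iff₀ (by positivity) (by norm_num)]
    push_cast
    nlinarith [pi_pos]
  set c0 : ℝ := Real.cos γ with hc0
  have hsinγ : Real.sin γ = Real.sqrt (1 - c0^2) := by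
    rw [hc0, Real.sin_eq_sqrt_one_sub_cos_sq hγpos.le (by linarith [pi_pos])]
  have hsinγ_ge : 1/(n:ℝ) ≤ Real.sin γ := by
    have := Real.mul_le_sin hγpos.le hγle
    have hγval : γ = π/(2*n) := by rw [hγ, th]; push_cast; ring
    rw [hγval] at this ⊢
    have hπ := pi_pos
    calc 1/(n:ℝ) = 2/π * (π/(2*n)) := by field_simp
      _ ≤ _ := this
  rcases le_or_gt x c0 with hxc | hxc
  · rcases le_or_gt (-c0) x with hxc' | hxc'
    · -- bernstein zone
      set θ := Real.arccos x with hθ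
      have hcos : Real.cos θ = x := Real.cos_arccos hx1 hx2
      have hsin : Real.sin θ = Real.sqrt (1 - x^2) := Real.sin_arccos x
      have hsin_ge : Real.sin γ ≤ Real.sin θ := by
        rw [hsin, hsinγ]
        apply Real.sqrt_le_sqrt
        nlinarith
      have hsinθpos : 0 < Real.sin θ := lt_of_lt_of_le (by positivity) (le_trans hsinγ_ge hsin_ge)
      have hb := bernstein hn hq hM θ
      rw [hcos, abs_mul, abs_of_pos hsinθpos] at hb
      have h1n : 1/(n:ℝ) ≤ Real.sin θ := le_trans hsinγ_ge hsin_ge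
      have hnpos : (0:ℝ) < n := by linarith
      have h7 : |q.derivative.eval x| / n ≤ n * M := by
        calc |q.derivative.eval x| / n = |q.derivative.eval x| * (1/n) := by ring
          _ ≤ |q.derivative.eval x| * Real.sin θ :=
              mul_le_mul_of_nonneg_left h1n (abs_nonneg _)
          _ = Real.sin θ * |q.derivative.eval x| := by ring
          _ ≤ n * M := hb
      rw [div_le_iff₀ hnpos] at h7
      calc |q.derivative.eval x| ≤ n * M * n := h7
        _ = (n:ℝ)^2 * M := by ring
    · -- left endpoint zone
      apply endpoint_bound hn hq hM (Set.mem_Icc.mpr ⟨hx1, hx2⟩)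
      right
      intro j hj
      have h1 : th n j ≤ th n (n-1) := th_mono hn (by omega)
      have h2 : th n (n-1) = π - γ := by
        rw [hγ, th, th]
        have : (n:ℝ) ≠ 0 := by positivity
        push_cast [Nat.cast_sub hn]
        field_simp
        ring
      have h3 : Real.cos (th n (n-1)) ≤ Real.cos (th n j) :=
        Real.cos_le_cos_of_nonneg_of_le_pi (th_pos hn j).le (th_lt_pi hn (by omega)).le h1
      rw [h2, Real.cos_pi_sub] at h3
      have : x ≤ -c0 := hxc'.le
      calc x ≤ -c0 := this
        _ ≤ Real.cos (th n j) := by rw [hc0]; exact h3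
  · -- right endpoint zone
    apply endpoint_bound hn hq hM (Set.mem_Icc.mpr ⟨hx1, hx2⟩)
    left
    intro j hj
    have h1 : th n 0 ≤ th n j := th_mono hn (by omega)
    have h3 : Real.cos (th n j) ≤ Real.cos (th n 0) :=
      Real.cos_le_cos_of_nonneg_of_le_pi (th_pos hn 0).le (th_lt_pi hn hj).le h1
    calc nd n j ≤ c0 := h3
      _ ≤ x := hxc.le

end MarkovAux


/-- Markov's inequality for polynomials. -/
theorem markov_inequality (p : Polynomial ℝ) (a b H : ℝ) (hab : a < b) (hH : 0 ≤ H)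
    (hbound : ∀ x ∈ Set.Icc a b, ∀ y ∈ Set.Icc a b, |p.eval x - p.eval y| ≤ H) :
    ∀ x ∈ Set.Icc a b, |p.derivative.eval x| ≤ H / (b - a) * (p.natDegree : ℝ) ^ 2 := by
  intro x hx
  set n := p.natDegree with hn
  rcases Nat.eq_zero_or_pos n with hn0 | hn1
  · have hp : p = Polynomial.C (p.coeff 0) := Polynomial.eq_C_of_natDegree_le_zero (le_of_eq hn0)
    rw [hp]
    simp only [Polynomial.derivative_C, Polynomial.eval_zero, abs_zero]
    rw [hn0]
    norm_num
  · have hba : (0:ℝ) < b - a := by linarith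
    -- extrema
    have hcont : ContinuousOn (fun y => p.eval y) (Set.Icc a b) :=
      (Polynomial.continuous p).continuousOn
    obtain ⟨u, hu, hmax⟩ := isCompact_Icc.exists_isMaxOn (Set.nonempty_Icc.mpr hab.le) hcont
    obtain ⟨w, hw, hmin⟩ := isCompact_Icc.exists_isMinOn (Set.nonempty_Icc.mpr hab.le) hcont
    set m : ℝ := (p.eval u + p.eval w)/2 with hm
    have huw := hbound u hu w hw
    rw [abs_le] at huw
    have hcenter : ∀ y ∈ Set.Icc a b, |p.eval y - m| ≤ H/2 := by
      intro y hy
      have h1 : p.eval y ≤ p.eval u := hmax hy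
      have h2 : p.eval w ≤ p.eval y := hmin hy
      rw [abs_le]
      constructor <;> [skip; skip] <;> rw [hm] <;> linarith [huw.1, huw.2]
    -- affine substitution
    set σ : Polynomial ℝ := Polynomial.C ((b-a)/2) * Polynomial.X + Polynomial.C ((a+b)/2) with hσ
    set q : Polynomial ℝ := p.comp σ - Polynomial.C m with hq
    have hσdeg : σ.natDegree = 1 := Polynomial.natDegree_linear (by positivity)
    have hqdeg : q.natDegree = n := by
      rw [hq, Polynomial.natDegree_sub_C, Polynomial.natDegree_comp, hσdeg, mul_one]
    have hσeval : ∀ t : ℝ, σ.eval t = (b-a)/2 * t + (a+b)/2 := by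
      intro t
      rw [hσ]
      simp
    have hσmem : ∀ t ∈ Set.Icc (-1:ℝ) 1, σ.eval t ∈ Set.Icc a b := by
      intro t ht
      obtain ⟨ht1, ht2⟩ := ht
      rw [hσeval]
      constructor <;> nlinarith
    have hqM : ∀ t ∈ Set.Icc (-1:ℝ) 1, |q.eval t| ≤ H/2 := by
      intro t ht
      rw [hq, Polynomial.eval_sub, Polynomial.eval_C, Polynomial.eval_comp]
      exact hcenter _ (hσmem t ht)
    -- derivative relation
    have hqder : q.derivative = Polynomial.C ((b-a)/2) * p.derivative.comp σ := by
      rw [hq, Polynomial.derivative_sub, Polynomial.derivative_C, sub_zero,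
        Polynomial.derivative_comp, hσ]
      simp
    -- the point t
    set t : ℝ := (2*x - (a+b))/(b-a) with htdef
    have htmem : t ∈ Set.Icc (-1:ℝ) 1 := by
      obtain ⟨hx1, hx2⟩ := hx
      constructor
      · rw [htdef, le_div_iff₀ hba]; linarith
      · rw [htdef, div_le_one hba]; linarith
    have hσt : σ.eval t = x := by
      rw [hσeval, htdef]
      field_simp
      ring
    have hcore := MarkovAux.core hn1 (le_of_eq hqdeg) hqM htmem
    rw [hqder] at hcore
    rw [Polynomial.eval_mul, Polynomial.eval_C, Polynomial.eval_comp, hσt, abs_mul,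
      abs_of_pos (by positivity : (0:ℝ) < (b-a)/2)] at hcore
    rw [show H/(b-a) * (n:ℝ)^2 = ((n:ℝ)^2 * (H/2)) / ((b-a)/2) by field_simp]
    rw [le_div_iff₀ (by positivity)]
    linarith [hcore]
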